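/- arXiv:2106.07042 — 2 statements merged into one kernel-verified Lean document; each statement's English description precedes it below -/
import Mathlib

section
/- Let H be a hypergraph with rank r (maximal edge cardinality), n vertices, and m edges. Then E(H) ≤ √(n(r-1)Z(H)) ≤ √(nm(r² - r)Δ), where Z(H) = Σ_v d(v)² is the Zagreb index and Δ the maximum degree. -/
open Matrix BigOperators

set_option linter.unusedSectionVars false

variable {V : Type*} [Fintype V] [DecidableEq V]

/-- Adjacency matrix of a (multi-)hypergraph given by its multiset of edges:
entry `(i,j)` is the number of edges containing both `i` and `j`, with zero diagonal. -/
def adjacencyMatrix (E : Multiset (Finset V)) : Matrix V V ℝ :=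
  Matrix.of fun i j => if i = j then 0 else ((E.filter (fun e => i ∈ e ∧ j ∈ e)).card : ℝ)

lemma adjacency_isHermitian (E : Multiset (Finset V)) : (adjacencyMatrix E).IsHermitian := by
  unfold Matrix.IsHermitian
  ext i j
  by_cases h : i = j
  · subst h; simp [adjacencyMatrix]
  · simp only [adjacencyMatrix, Matrix.conjTranspose_apply, Matrix.of_apply, h, Ne.symm h,
      if_false, star_trivial]
    congr 1
    exact congrArg Multiset.card (Multiset.filter_congr (fun e _ => and_comm))

/-- Energy of a (multi-)hypergraph: sum of the absolute values of the adjacency eigenvalues. -/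
noncomputable def energy (E : Multiset (Finset V)) : ℝ :=
  ∑ i, |(adjacency_isHermitian E).eigenvalues i|

/-- Degree of a vertex: the number of edges containing it. -/
def hdegree (E : Multiset (Finset V)) (v : V) : ℕ := (E.filter (fun e => v ∈ e)).card

/-- Zagreb index: sum of squares of vertex degrees. -/
def zagreb (E : Multiset (Finset V)) : ℕ := ∑ v, (hdegree E v)^2

/- ### Auxiliary lemmas -/

lemma trace_sq_eq {A : Matrix V V ℝ} (hA : A.IsHermitian) :
    (A * A).trace = ∑ i, hA.eigenvalues i ^ 2 := by
  obtain ⟨U, hUmem, hs⟩ : ∃ U ∈ Matrix.unitaryGroup V ℝ,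
      A = U * Matrix.diagonal (RCLike.ofReal ∘ hA.eigenvalues) * star U :=
    ⟨_, (Matrix.IsHermitian.eigenvectorUnitary hA).2, hA.spectral_theorem⟩
  set D : Matrix V V ℝ := Matrix.diagonal (RCLike.ofReal ∘ hA.eigenvalues) with hD
  have h1 : star U * U = 1 := (Matrix.mem_unitaryGroup_iff').mp hUmem
  have key : A * A = U * (D * D) * star U := by
    rw [hs]
    calc U * D * star U * (U * D * star U)
        = U * (D * ((star U * U) * (D * star U))) := by simp only [mul_assoc]
      _ = U * (D * D) * star U := by rw [h1, one_mul]; simp only [mul_assoc]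
  rw [key, Matrix.trace_mul_cycle, ← mul_assoc, h1, one_mul, hD,
    Matrix.diagonal_mul_diagonal, Matrix.trace_diagonal]
  simp [sq]

lemma hdeg_eq (E : Finset (Finset V)) (v : V) :
    hdegree E.val v = (E.filter (fun e => v ∈ e)).card := rfl

lemma dd_symm (E : Finset (Finset V)) (i j : V) :
    (E.filter (fun e => j ∈ e ∧ i ∈ e)).card = (E.filter (fun e => i ∈ e ∧ j ∈ e)).card := by
  congr 1
  exact Finset.filter_congr (fun e _ => and_comm)

lemma dd_le_deg (E : Finset (Finset V)) (i j : V) :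
    (E.filter (fun e => i ∈ e ∧ j ∈ e)).card ≤ hdegree E.val i := by
  rw [hdeg_eq]
  exact Finset.card_le_card (Finset.monotone_filter_right E (fun e _ h => h.1))

lemma row_sum_le (E : Finset (Finset V)) (r : ℕ) (hr : ∀ e ∈ E, e.card ≤ r) (i : V) :
    ∑ j ∈ Finset.univ.erase i, (E.filter (fun e => i ∈ e ∧ j ∈ e)).card
      ≤ (r - 1) * hdegree E.val i := by
  have h1 : ∀ j, (E.filter (fun e => i ∈ e ∧ j ∈ e)).card
      = ∑ e ∈ E, if i ∈ e ∧ j ∈ e then 1 else 0 := fun j => by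
    rw [Finset.card_filter]
  simp only [h1]
  rw [Finset.sum_comm]
  rw [hdeg_eq, Finset.card_filter, Finset.mul_sum]
  apply Finset.sum_le_sum
  intro e he
  by_cases hi : i ∈ e
  · simp only [hi, true_and, mul_ite, mul_one, mul_zero, if_true]
    have hset : ((Finset.univ.erase i).filter (fun j => j ∈ e)) = e.erase i := by
      ext j; simp [Finset.mem_erase, and_comm]
    calc ∑ j ∈ Finset.univ.erase i, (if j ∈ e then 1 else 0)
        = (e.erase i).card := by rw [← Finset.card_filter, hset]
      _ ≤ r - 1 := by
          rw [Finset.card_erase_of_mem hi]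
          exact Nat.sub_le_sub_right (hr e he) 1
  · simp [hi]

lemma main_nat (E : Finset (Finset V)) (r : ℕ) (hr : ∀ e ∈ E, e.card ≤ r) :
    ∑ i : V, ∑ j ∈ Finset.univ.erase i, ((E.filter (fun e => i ∈ e ∧ j ∈ e)).card)^2
      ≤ (r - 1) * zagreb E.val := by
  rw [zagreb, Finset.mul_sum]
  apply Finset.sum_le_sum
  intro i _
  calc ∑ j ∈ Finset.univ.erase i, ((E.filter (fun e => i ∈ e ∧ j ∈ e)).card)^2
      ≤ ∑ j ∈ Finset.univ.erase i,
          hdegree E.val i * (E.filter (fun e => i ∈ e ∧ j ∈ e)).card :=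
        Finset.sum_le_sum fun j _ => by
          rw [sq]; exact Nat.mul_le_mul_right _ (dd_le_deg E i j)
    _ = hdegree E.val i * ∑ j ∈ Finset.univ.erase i,
          (E.filter (fun e => i ∈ e ∧ j ∈ e)).card := (Finset.mul_sum _ _ _).symm
    _ ≤ hdegree E.val i * ((r - 1) * hdegree E.val i) :=
        Nat.mul_le_mul_left _ (row_sum_le E r hr i)
    _ = (r - 1) * hdegree E.val i ^ 2 := by ring

lemma deg_sum_le (E : Finset (Finset V)) (r : ℕ) (hr : ∀ e ∈ E, e.card ≤ r) :
    ∑ v, hdegree E.val v ≤ E.card * r := by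
  simp only [hdeg_eq, Finset.card_filter]
  rw [Finset.sum_comm]
  calc ∑ e ∈ E, ∑ v : V, (if v ∈ e then 1 else 0)
      = ∑ e ∈ E, e.card := by
        apply Finset.sum_congr rfl; intro e _
        rw [← Finset.card_filter, Finset.filter_mem_eq_inter, Finset.univ_inter]
    _ ≤ ∑ _e ∈ E, r := Finset.sum_le_sum fun e he => hr e he
    _ = E.card * r := by simp [mul_comm]

lemma zagreb_le (E : Finset (Finset V)) (r : ℕ) (hr : ∀ e ∈ E, e.card ≤ r)
    (Δ : ℕ) (hΔ : ∀ v : V, hdegree E.val v ≤ Δ) :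
    zagreb E.val ≤ Δ * (E.card * r) := by
  calc zagreb E.val = ∑ v, hdegree E.val v ^ 2 := rfl
    _ ≤ ∑ v, Δ * hdegree E.val v :=
        Finset.sum_le_sum fun v _ => by
          rw [sq]; exact Nat.mul_le_mul_right _ (hΔ v)
    _ = Δ * ∑ v, hdegree E.val v := (Finset.mul_sum _ _ _).symm
    _ ≤ Δ * (E.card * r) := Nat.mul_le_mul_left _ (deg_sum_le E r hr)

lemma trace_adj_sq (E : Finset (Finset V)) :
    ((adjacencyMatrix E.val) * (adjacencyMatrix E.val)).trace
      = ∑ i : V, ∑ j ∈ Finset.univ.erase i,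
          (((E.filter (fun e => i ∈ e ∧ j ∈ e)).card : ℝ))^2 := by
  rw [Matrix.trace]
  apply Finset.sum_congr rfl
  intro i _
  rw [Matrix.diag_apply, Matrix.mul_apply]
  have h0 : adjacencyMatrix E.val i i * adjacencyMatrix E.val i i = 0 := by
    simp [adjacencyMatrix]
  rw [← Finset.sum_erase (f := fun j => adjacencyMatrix E.val i j * adjacencyMatrix E.val j i)
    Finset.univ h0]
  apply Finset.sum_congr rfl
  intro j hj
  have hij : i ≠ j := fun h => (Finset.mem_erase.mp hj).1 h.symm
  have e1 : adjacencyMatrix E.val i j = ((E.filter (fun e => i ∈ e ∧ j ∈ e)).card : ℝ) := by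
    simp only [adjacencyMatrix, Matrix.of_apply, hij, if_false]
    norm_cast
  have e2 : adjacencyMatrix E.val j i = ((E.filter (fun e => i ∈ e ∧ j ∈ e)).card : ℝ) := by
    simp only [adjacencyMatrix, Matrix.of_apply, hij.symm, if_false]
    rw [show (E.val.filter (fun e => j ∈ e ∧ i ∈ e)).card
        = ((E.filter (fun e => j ∈ e ∧ i ∈ e)).card : ℕ) from rfl, dd_symm]
  rw [e1, e2, sq]

lemma energy_empty : energy (0 : Multiset (Finset V)) = 0 := by
  have hA0 : adjacencyMatrix (0 : Multiset (Finset V)) = 0 := by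
    ext i j; simp [adjacencyMatrix]
  unfold energy
  apply Finset.sum_eq_zero
  intro i _
  rw [(adjacency_isHermitian (0 : Multiset (Finset V))).eigenvalues_eq]
  have hmv : ∀ v : V → ℝ, adjacencyMatrix (0 : Multiset (Finset V)) *ᵥ v = 0 := by
    intro v; rw [hA0]; simp
  rw [hmv]
  simp

/-- for a hypergraph with `n` vertices, `m` edges, rank `r` and maximum
degree `Δ`: `E(H) ≤ √(n(r-1)Z(H)) ≤ √(nm(r²-r)Δ)` where `Z` is the Zagreb index. -/
theorem stmt_17 (E : Finset (Finset V)) (hcard : ∀ e ∈ E, 2 ≤ e.card)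
    (r : ℕ) (hr : ∀ e ∈ E, e.card ≤ r)
    (Δ : ℕ) (hΔ : ∀ v : V, hdegree E.val v ≤ Δ) :
    energy E.val ≤
      Real.sqrt ((Fintype.card V : ℝ) * ((r : ℝ) - 1) * (zagreb E.val : ℝ)) ∧
    Real.sqrt ((Fintype.card V : ℝ) * ((r : ℝ) - 1) * (zagreb E.val : ℝ)) ≤
      Real.sqrt ((Fintype.card V : ℝ) * (E.card : ℝ) * ((r : ℝ) ^ 2 - (r : ℝ)) * (Δ : ℝ)) := by
  rcases E.eq_empty_or_nonempty with he | ⟨e0, he0⟩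
  · subst he
    have hz : zagreb (0 : Multiset (Finset V)) = 0 := by
      simp [zagreb, hdegree]
    have hv : (∅ : Finset (Finset V)).val = 0 := rfl
    constructor
    · rw [hv, energy_empty]
      exact Real.sqrt_nonneg _
    · rw [hv, hz]
      simp [Real.sqrt_nonneg]
  · -- nonempty case
    have hr2 : 2 ≤ r := le_trans (hcard e0 he0) (hr e0 he0)
    have hr1R : (1 : ℝ) ≤ (r : ℝ) := by exact_mod_cast le_trans (by norm_num) hr2
    have hrsub : ((r - 1 : ℕ) : ℝ) = (r : ℝ) - 1 := by
      rw [Nat.cast_sub (le_trans (by norm_num) hr2)]; norm_num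
    set n : ℝ := (Fintype.card V : ℝ) with hn
    have hn0 : 0 ≤ n := Nat.cast_nonneg _
    set Z : ℝ := (zagreb E.val : ℝ) with hZdef
    have hZ0 : 0 ≤ Z := Nat.cast_nonneg _
    -- trace bound
    have hTle : ∑ i, (adjacency_isHermitian E.val).eigenvalues i ^ 2 ≤ ((r : ℝ) - 1) * Z := by
      rw [← trace_sq_eq, trace_adj_sq]
      have := main_nat E r hr
      calc ∑ i : V, ∑ j ∈ Finset.univ.erase i,
            (((E.filter (fun e => i ∈ e ∧ j ∈ e)).card : ℝ))^2
          = ((∑ i : V, ∑ j ∈ Finset.univ.erase i,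
              ((E.filter (fun e => i ∈ e ∧ j ∈ e)).card)^2 : ℕ) : ℝ) := by push_cast; ring
        _ ≤ (((r - 1) * zagreb E.val : ℕ) : ℝ) := by exact_mod_cast this
        _ = ((r : ℝ) - 1) * Z := by push_cast [hrsub]; ring
    -- Cauchy-Schwarz
    have hcs : (energy E.val) ^ 2 ≤ n * ∑ i, (adjacency_isHermitian E.val).eigenvalues i ^ 2 := by
      have h := sq_sum_le_card_mul_sum_sq
        (s := (Finset.univ : Finset V))
        (f := fun i => |(adjacency_isHermitian E.val).eigenvalues i|)
      simpa [energy, sq_abs, hn] using h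
    have hE0 : 0 ≤ energy E.val := Finset.sum_nonneg fun i _ => abs_nonneg _
    constructor
    · have h2 : (energy E.val) ^ 2 ≤ n * ((r : ℝ) - 1) * Z := by
        calc (energy E.val) ^ 2
            ≤ n * ∑ i, (adjacency_isHermitian E.val).eigenvalues i ^ 2 := hcs
          _ ≤ n * (((r : ℝ) - 1) * Z) := mul_le_mul_of_nonneg_left hTle hn0
          _ = n * ((r : ℝ) - 1) * Z := by ring
      calc energy E.val = Real.sqrt ((energy E.val) ^ 2) := (Real.sqrt_sq hE0).symm
        _ ≤ Real.sqrt (n * ((r : ℝ) - 1) * Z) := Real.sqrt_le_sqrt h2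
    · apply Real.sqrt_le_sqrt
      have hZle : Z ≤ (Δ : ℝ) * ((E.card : ℝ) * (r : ℝ)) := by
        rw [hZdef]; exact_mod_cast zagreb_le E r hr Δ hΔ
      have h3 : 0 ≤ n * ((r : ℝ) - 1) := mul_nonneg hn0 (by linarith)
      have h4 := mul_le_mul_of_nonneg_left hZle h3
      nlinarith [h4]
end

section
/- Let H be a hypergraph with n vertices, co-rank s, and eigenvalues λ_1, ..., λ_n of its adjacency matrix A. Then E(H)² ≥ Σ_i λ_i² + n(n-1)|det(A)|^{2/n}, and consequently E(H) ≥ √( (n/(n-1)) λ_1² + n(n-1)|det(A)|^{2/n} ). -/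
open Matrix BigOperators

set_option linter.unusedSectionVars false

variable {V : Type*} [Fintype V] [DecidableEq V]

lemma my_sum_eigenvalues_eq_trace {n : Type*} [Fintype n] [DecidableEq n]
    {A : Matrix n n ℝ} (hA : A.IsHermitian) : ∑ i, hA.eigenvalues i = A.trace := by
  rw [hA.trace_eq_sum_eigenvalues]
  simp

/-- for a hypergraph with `n` vertices and adjacency matrix `A` with
eigenvalues `λ_i`, `E(H)² ≥ Σ λ_i² + n(n-1)|det A|^{2/n}`, and consequently
`E(H) ≥ √( (n/(n-1)) λ₁² + n(n-1)|det A|^{2/n} )`. -/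


theorem stmt_19 [Nonempty V] (E : Finset (Finset V)) (hcard : ∀ e ∈ E, 2 ≤ e.card) :
    energy E.val ^ 2 ≥
      (∑ i, (adjacency_isHermitian E.val).eigenvalues i ^ 2) +
        (Fintype.card V : ℝ) * ((Fintype.card V : ℝ) - 1) *
          |(adjacencyMatrix E.val).det| ^ ((2 : ℝ) / (Fintype.card V : ℝ)) ∧
    energy E.val ≥
      Real.sqrt (((Fintype.card V : ℝ) / ((Fintype.card V : ℝ) - 1)) *
          (⨆ i, (adjacency_isHermitian E.val).eigenvalues i) ^ 2 +
        (Fintype.card V : ℝ) * ((Fintype.card V : ℝ) - 1) *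
          |(adjacencyMatrix E.val).det| ^ ((2 : ℝ) / (Fintype.card V : ℝ))) := by
    classical
  set A := adjacencyMatrix E.val with hA
  set μ := (adjacency_isHermitian E.val).eigenvalues with hμdef
  set n := Fintype.card V with hn
  have hn1 : 1 ≤ n := Fintype.card_pos
  have hnR : (1 : ℝ) ≤ (n : ℝ) := by exact_mod_cast hn1
  set a : V → ℝ := fun i => |μ i| with hadef
  have ha : ∀ i, 0 ≤ a i := fun i => abs_nonneg _
  set P : ℝ := ∏ i, a i with hPdef
  have hdetP : |A.det| = P := by
    rw [hPdef, (adjacency_isHermitian E.val).det_eq_prod_eigenvalues, ← hμdef,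
      Finset.abs_prod]
    exact Finset.prod_congr rfl fun x _ => by norm_cast
  have hPnn : 0 ≤ P := Finset.prod_nonneg fun i _ => ha i
  have hEnn : 0 ≤ energy E.val := Finset.sum_nonneg fun i _ => abs_nonneg _
  have hsq : energy E.val ^ 2 =
      (∑ i, μ i ^ 2) + ∑ p ∈ (Finset.univ : Finset V).offDiag, a p.1 * a p.2 := by
    have h1 : energy E.val ^ 2 = ∑ p ∈ (Finset.univ ×ˢ Finset.univ : Finset (V × V)),
        a p.1 * a p.2 := by
      rw [energy, sq, Finset.sum_mul_sum, ← Finset.sum_product']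
    rw [h1, ← Finset.diag_union_offDiag,
      Finset.sum_union (Finset.disjoint_diag_offDiag _), Finset.sum_diag]
    congr 1
    refine Finset.sum_congr rfl fun i _ => ?_
    rw [← sq, hadef, sq_abs]
  have hoffnn : 0 ≤ ∑ p ∈ (Finset.univ : Finset V).offDiag, a p.1 * a p.2 :=
    Finset.sum_nonneg fun p _ => mul_nonneg (ha _) (ha _)
  -- key AM-GM bound
  have hkey : (n : ℝ) * ((n : ℝ) - 1) * |A.det| ^ ((2 : ℝ) / (n : ℝ)) ≤
      ∑ p ∈ (Finset.univ : Finset V).offDiag, a p.1 * a p.2 := by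
    rcases eq_or_lt_of_le hn1 with h1 | h2
    · rw [← h1]; simpa using hoffnn
    · have hn2 : 2 ≤ n := h2
      have hn2R : (2 : ℝ) ≤ (n : ℝ) := by exact_mod_cast hn2
      rcases eq_or_ne A.det 0 with hd0 | hd0
      · rw [hd0, abs_zero, Real.zero_rpow (by positivity), mul_zero]
        exact hoffnn
      · have hPpos : 0 < P := by
          rcases hPnn.lt_or_eq with h | h
          · exact h
          · exact absurd (by rw [hdetP, ← h]) (abs_ne_zero.mpr hd0)
        set s := (Finset.univ : Finset V).offDiag with hsdef
        have hnn : n ≤ n * n := Nat.le_mul_of_pos_left n hn1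
        have hcardS : (s.card : ℝ) = (n : ℝ) * ((n : ℝ) - 1) := by
          rw [hsdef, Finset.offDiag_card, Finset.card_univ, ← hn, Nat.cast_sub hnn]
          push_cast
          ring
        have hcpos : (0 : ℝ) < (s.card : ℝ) := by rw [hcardS]; nlinarith
        -- products
        have hP1 : ∏ p ∈ (Finset.univ ×ˢ Finset.univ : Finset (V × V)), a p.1 = P ^ n := by
          rw [Finset.prod_product]
          simp [Finset.prod_const, Finset.card_univ, Finset.prod_pow, ← hn]
          rfl
        have hP2 : ∏ p ∈ (Finset.univ ×ˢ Finset.univ : Finset (V × V)), a p.2 = P ^ n := by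
          rw [Finset.prod_product]
          simp [Finset.prod_const, Finset.card_univ, ← hn, ← hPdef]
        have hall : ∏ p ∈ (Finset.univ ×ˢ Finset.univ : Finset (V × V)),
            (a p.1 * a p.2) = P ^ n * P ^ n := by
          rw [Finset.prod_mul_distrib, hP1, hP2]
        have hunion : (P * P) * ∏ p ∈ s, (a p.1 * a p.2) = P ^ n * P ^ n := by
          rw [← hall, ← Finset.diag_union_offDiag,
            Finset.prod_union (Finset.disjoint_diag_offDiag _), Finset.prod_diag,
            ← Finset.prod_mul_distrib]
        have hprodS : ∏ p ∈ s, (a p.1 * a p.2) = P ^ (2 * n - 2) := by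
          have hPP : P * P ≠ 0 := by positivity
          apply mul_left_cancel₀ hPP
          rw [hunion, ← pow_add, ← pow_two, ← pow_add]
          congr 1
          omega
        -- AM-GM
        have hamgm := Real.geom_mean_le_arith_mean_weighted s
          (fun _ => 1 / (s.card : ℝ)) (fun p => a p.1 * a p.2)
          (fun i _ => by positivity) (by
            rw [Finset.sum_const, nsmul_eq_mul]
            field_simp)
          (fun p _ => mul_nonneg (ha _) (ha _))
        have hlhs : ∏ p ∈ s, (a p.1 * a p.2) ^ ((1 : ℝ) / (s.card : ℝ)) =
            P ^ ((2 : ℝ) / (n : ℝ)) := by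
          rw [Real.finset_prod_rpow s _ (fun p _ => mul_nonneg (ha _) (ha _)), hprodS,
            ← Real.rpow_natCast P (2 * n - 2), ← Real.rpow_mul hPnn]
          congr 1
          rw [Nat.cast_sub (by omega : 2 ≤ 2 * n), hcardS]
          have hne : (n : ℝ) - 1 ≠ 0 := by linarith
          have hne0 : (n : ℝ) ≠ 0 := by linarith
          push_cast
          field_simp
        rw [hlhs] at hamgm
        have hrhs : ∑ p ∈ s, (1 / (s.card : ℝ)) * (a p.1 * a p.2) =
            (1 / (s.card : ℝ)) * ∑ p ∈ s, (a p.1 * a p.2) := by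
          rw [Finset.mul_sum]
        rw [hrhs] at hamgm
        rw [hdetP, ← hcardS]
        calc (s.card : ℝ) * P ^ ((2:ℝ)/(n:ℝ))
            ≤ (s.card : ℝ) * ((1 / (s.card : ℝ)) * ∑ p ∈ s, (a p.1 * a p.2)) := by
              exact mul_le_mul_of_nonneg_left hamgm hcpos.le
          _ = ∑ p ∈ s, (a p.1 * a p.2) := by field_simp
  have part1 : energy E.val ^ 2 ≥
      (∑ i, μ i ^ 2) + (n : ℝ) * ((n : ℝ) - 1) * |A.det| ^ ((2 : ℝ) / (n : ℝ)) := by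
    rw [hsq]; linarith
  refine ⟨part1, ?_⟩
  -- second part
  have htrace : ∑ i, μ i = 0 := by
    rw [hμdef, my_sum_eigenvalues_eq_trace]
    simp [Matrix.trace, Matrix.diag, adjacencyMatrix]
  obtain ⟨k, hk⟩ := Finite.exists_max μ
  have hsup : (⨆ i, μ i) = μ k :=
    le_antisymm (ciSup_le hk) (le_ciSup (Set.Finite.bddAbove (Set.finite_range μ)) k)
  have hcs : (n : ℝ) / ((n : ℝ) - 1) * μ k ^ 2 ≤ ∑ i, μ i ^ 2 := by
    rcases eq_or_lt_of_le hn1 with h1 | h2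
    · have : (n : ℝ) - 1 = 0 := by rw [← h1]; norm_num
      rw [this, div_zero, zero_mul]
      positivity
    · have hn2 : 2 ≤ n := h2
      have hn2R : (2 : ℝ) ≤ (n : ℝ) := by exact_mod_cast hn2
      have hne : (0:ℝ) < (n : ℝ) - 1 := by linarith
      have h1 : ∑ i ∈ Finset.univ.erase k, μ i = - μ k := by
        have := htrace
        rw [← Finset.add_sum_erase _ _ (Finset.mem_univ k)] at this
        linarith
      have h2 : μ k ^ 2 ≤ ((n : ℝ) - 1) * ∑ i ∈ Finset.univ.erase k, μ i ^ 2 := by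
        have hcs' := sq_sum_le_card_mul_sum_sq (s := Finset.univ.erase k) (f := μ)
        rw [h1, neg_pow, Finset.card_erase_of_mem (Finset.mem_univ k),
          Finset.card_univ, ← hn, Nat.cast_sub hn1] at hcs'
        simpa using hcs'
      have h3 : ∑ i, μ i ^ 2 = μ k ^ 2 + ∑ i ∈ Finset.univ.erase k, μ i ^ 2 :=
        (Finset.add_sum_erase _ _ (Finset.mem_univ k)).symm
      have hexpand : (n : ℝ) / ((n : ℝ) - 1) * μ k ^ 2
          = μ k ^ 2 + μ k ^ 2 / ((n : ℝ) - 1) := by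
        field_simp
        ring
      have h4 : μ k ^ 2 / ((n : ℝ) - 1) ≤ ∑ i ∈ Finset.univ.erase k, μ i ^ 2 := by
        rw [div_le_iff₀ hne]
        linarith
      linarith
  have hterm : 0 ≤ (n : ℝ) * ((n : ℝ) - 1) * |A.det| ^ ((2 : ℝ) / (n : ℝ)) := by
    have h0 : (0:ℝ) ≤ |A.det| ^ ((2 : ℝ) / (n : ℝ)) := Real.rpow_nonneg (abs_nonneg _) _
    exact mul_nonneg (mul_nonneg (by linarith) (by linarith)) h0
  have hin : (n : ℝ) / ((n : ℝ) - 1) * (⨆ i, μ i) ^ 2 +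
      (n : ℝ) * ((n : ℝ) - 1) * |A.det| ^ ((2 : ℝ) / (n : ℝ)) ≤ energy E.val ^ 2 := by
    rw [hsup]
    calc (n : ℝ) / ((n : ℝ) - 1) * μ k ^ 2 +
        (n : ℝ) * ((n : ℝ) - 1) * |A.det| ^ ((2 : ℝ) / (n : ℝ))
        ≤ (∑ i, μ i ^ 2) + (n : ℝ) * ((n : ℝ) - 1) * |A.det| ^ ((2 : ℝ) / (n : ℝ)) := by
          linarith
      _ ≤ energy E.val ^ 2 := part1
  calc Real.sqrt ((n : ℝ) / ((n : ℝ) - 1) * (⨆ i, μ i) ^ 2 +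
        (n : ℝ) * ((n : ℝ) - 1) * |A.det| ^ ((2 : ℝ) / (n : ℝ)))
      ≤ Real.sqrt (energy E.val ^ 2) := Real.sqrt_le_sqrt hin
    _ = energy E.val := Real.sqrt_sq hEnn
end
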